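/- Fix Q > 0 and T > 0, and define the threshold η_th = (2^{Q/T} − 1)/(2^{Q/T}·(ln 2)·(Q/T)). If η ∈ [0, η_th), then there exists a unique ρ_c ∈ (0, 1) such that the function g_η(ρ) = (2^{Q/((1-ρ)T)} − 1)/(ρ/(1-ρ) + η) attains its minimum over [0, 1) at ρ_c; in particular g_η(ρ_c) < g_η(0), so the optimal save-ratio is strictly positive. -/

import Mathlib

open Real Set

lemma key_exists_min (c η : ℝ) (hc : 0 < c) (hη : 0 ≤ η)
    (hφ1 : c * Real.exp c * η - (Real.exp c - 1) < 0) :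
    ∃ xs : ℝ, 1 < xs ∧ ∀ x : ℝ, x ≠ xs →
      (Real.exp (c * xs) - 1) * (x - 1 + η) < (Real.exp (c * x) - 1) * (xs - 1 + η) := by
  have hc' : (0:ℝ) < 1/c := by positivity
  set M : ℝ := 1/c + 2 with hMdef
  have hM1 : (1:ℝ) < M := by rw [hMdef]; linarith
  set φ : ℝ → ℝ := fun x => c * Real.exp (c * x) * (x - 1 + η) - (Real.exp (c * x) - 1)
    with hφdef
  have hφ1' : φ 1 < 0 := by
    have e1 : φ 1 = c * Real.exp c * η - (Real.exp c - 1) := by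
      simp only [hφdef, mul_one]
      ring
    rw [e1]; exact hφ1
  have hφM : 0 < φ M := by
    have hcM : c * (M - 1 + η) - 1 = c * η + c := by
      rw [hMdef]
      field_simp
      ring
    have hE := Real.exp_pos (c * M)
    have e2 : φ M = Real.exp (c * M) * (c * (M - 1 + η) - 1) + 1 := by
      simp only [hφdef]; ring
    rw [e2, hcM]
    nlinarith [mul_pos hE (show (0:ℝ) < c * η + c by nlinarith)]
  have hcont : ContinuousOn φ (Set.Icc 1 M) := by
    apply Continuous.continuousOn
    rw [hφdef]
    fun_prop
  obtain ⟨xs, hxsmem, hroot⟩ := intermediate_value_Ioo (le_of_lt hM1) hcont ⟨hφ1', hφM⟩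
  obtain ⟨hxs1, hxsM⟩ := hxsmem
  refine ⟨xs, hxs1, ?_⟩
  simp only [hφdef] at hroot
  set Ds : ℝ := xs - 1 + η with hDs
  have hDspos : 0 < Ds := by rw [hDs]; linarith
  set K : ℝ := Real.exp (c * xs) - 1 with hK
  set h : ℝ → ℝ := fun y => (Real.exp (c * y) - 1) * Ds - K * (y - 1 + η) with hh
  have hd0 : c * Real.exp (c * xs) * Ds - K = 0 := hroot
  have hder : ∀ x : ℝ, HasDerivAt h (c * Real.exp (c * x) * Ds - K) x := by
    intro x
    have h1 : HasDerivAt (fun y : ℝ => c * y) c x := by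
      simpa using (hasDerivAt_id x).const_mul c
    have h2 : HasDerivAt (fun y : ℝ => Real.exp (c * y)) (Real.exp (c * x) * c) x :=
      (Real.hasDerivAt_exp (c * x)).comp x h1
    have h3 : HasDerivAt (fun y : ℝ => (Real.exp (c * y) - 1) * Ds)
        (Real.exp (c * x) * c * Ds) x := (h2.sub_const 1).mul_const Ds
    have h4 : HasDerivAt (fun y : ℝ => K * (y - 1 + η)) K x := by
      have h5 := (((hasDerivAt_id x).sub_const 1).add_const η).const_mul K
      simpa using h5
    have h6 := h3.sub h4
    rw [hh]
    exact h6.congr_deriv (by ring)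
  have hcont_h : Continuous h := by
    rw [hh]; fun_prop
  have hmono : StrictMonoOn h (Set.Ici xs) := by
    apply strictMonoOn_of_deriv_pos (convex_Ici xs) hcont_h.continuousOn
    intro x hx
    rw [interior_Ici] at hx
    rw [(hder x).deriv]
    have hlt : Real.exp (c * xs) < Real.exp (c * x) :=
      Real.exp_lt_exp.mpr ((mul_lt_mul_iff_right₀ hc).mpr hx)
    nlinarith [mul_pos (mul_pos hc hDspos) (sub_pos.mpr hlt)]
  have hanti : StrictAntiOn h (Set.Iic xs) := by
    apply strictAntiOn_of_deriv_neg (convex_Iic xs) hcont_h.continuousOn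
    intro x hx
    rw [interior_Iic] at hx
    rw [(hder x).deriv]
    have hlt : Real.exp (c * x) < Real.exp (c * xs) :=
      Real.exp_lt_exp.mpr ((mul_lt_mul_iff_right₀ hc).mpr hx)
    nlinarith [mul_pos (mul_pos hc hDspos) (sub_pos.mpr hlt)]
  have hzero : h xs = 0 := by
    rw [hh]
    simp only
    rw [hDs, hK]
    ring
  intro x hx
  have hpos : 0 < h x := by
    rcases lt_or_gt_of_ne hx with h1 | h1
    · have := hanti (Set.mem_Iic.mpr (le_of_lt h1)) (Set.mem_Iic.mpr le_rfl) h1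
      linarith
    · have := hmono (Set.mem_Ici.mpr le_rfl) (Set.mem_Ici.mpr (le_of_lt h1)) h1
      linarith
  rw [hh] at hpos
  simp only at hpos
  rw [hDs, hK] at hpos
  rw [hK, hDs]
  linarith

/-- Fix `Q > 0`, `T > 0` and let `η_th = (2^{Q/T} − 1)/(2^{Q/T}·(ln 2)·(Q/T))`.
If the battery efficiency satisfies `0 ≤ η < η_th`, then there is a unique
`ρ_c ∈ (0,1)` at which `g_η(ρ) = (2^{Q/((1-ρ)T)} − 1)/(ρ/(1-ρ) + η)` attains its
minimum over `[0,1)`; in particular `g_η(ρ_c) < g_η(0)`, so the optimal save-ratio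
is strictly positive.  (The comparisons `g_η(ρ_c) < g_η(ρ)` are stated in the
equivalent cross-multiplied form `(2^{Q/((1-ρ_c)T)} − 1)(ρ/(1-ρ) + η) <
(2^{Q/((1-ρ)T)} − 1)(ρ_c/(1-ρ_c) + η)`, which is valid since the denominators
`ρ/(1-ρ) + η` are positive — interpreting `g_η(0) = +∞` when `η = 0`.) -/
theorem optimal_save_ratio_positive_below_threshold (Q T η : ℝ) (hQ : 0 < Q) (hT : 0 < T)
    (hη_lo : 0 ≤ η)
    (hη_hi : η < ((2 : ℝ) ^ (Q / T) - 1) / ((2 : ℝ) ^ (Q / T) * Real.log 2 * (Q / T))) :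
    ∃ ρc : ℝ, ρc ∈ Set.Ioo (0 : ℝ) 1 ∧
      (∀ ρ ∈ Set.Ico (0 : ℝ) 1, ρ ≠ ρc →
        ((2 : ℝ) ^ (Q / ((1 - ρc) * T)) - 1) * (ρ / (1 - ρ) + η) <
          ((2 : ℝ) ^ (Q / ((1 - ρ) * T)) - 1) * (ρc / (1 - ρc) + η)) ∧
      (((2 : ℝ) ^ (Q / ((1 - ρc) * T)) - 1) * ((0 : ℝ) / (1 - (0 : ℝ)) + η) <
          ((2 : ℝ) ^ (Q / ((1 - (0 : ℝ)) * T)) - 1) * (ρc / (1 - ρc) + η)) ∧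
      (∀ ρc' ∈ Set.Ioo (0 : ℝ) 1,
        (∀ ρ ∈ Set.Ico (0 : ℝ) 1, ρ ≠ ρc' →
          ((2 : ℝ) ^ (Q / ((1 - ρc') * T)) - 1) * (ρ / (1 - ρ) + η) <
            ((2 : ℝ) ^ (Q / ((1 - ρ) * T)) - 1) * (ρc' / (1 - ρc') + η)) →
        ρc' = ρc) := by
  have ha : 0 < Q / T := div_pos hQ hT
  set c : ℝ := Real.log 2 * (Q / T) with hcdef
  have hc : 0 < c := mul_pos (Real.log_pos one_lt_two) ha
  have h2exp : (2 : ℝ) ^ (Q / T) = Real.exp c := Real.rpow_def_of_pos two_pos _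
  have hφ1 : c * Real.exp c * η - (Real.exp c - 1) < 0 := by
    rw [h2exp] at hη_hi
    have hden : 0 < Real.exp c * Real.log 2 * (Q / T) := by positivity
    have h1 := (lt_div_iff₀ hden).mp hη_hi
    have h2 : c * Real.exp c * η = η * (Real.exp c * Real.log 2 * (Q / T)) := by
      rw [hcdef]; ring
    linarith
  obtain ⟨xs, hxs1, hkey⟩ := key_exists_min c η hc hη_lo hφ1
  have hxs0 : (0:ℝ) < xs := lt_trans one_pos hxs1
  set ρc : ℝ := 1 - 1/xs with hρcdef
  have h1ρc : 1 - ρc = 1/xs := by rw [hρcdef]; ring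
  have hρc0 : 0 < ρc := by
    have : 1/xs < 1 := (div_lt_one hxs0).mpr hxs1
    rw [hρcdef]; linarith
  have hρc1 : ρc < 1 := by
    have : 0 < 1/xs := by positivity
    rw [hρcdef]; linarith
  have hinvρc : 1 / (1 - ρc) = xs := by
    rw [h1ρc, one_div_one_div]
  have trans1 : ∀ ρ : ℝ, ρ < 1 →
      (2 : ℝ) ^ (Q / ((1 - ρ) * T)) = Real.exp (c * (1 / (1 - ρ))) := by
    intro ρ hρ
    have h1ρ : (1 : ℝ) - ρ ≠ 0 := by intro h; linarith [h]
    rw [Real.rpow_def_of_pos two_pos]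
    congr 1
    rw [hcdef]
    field_simp
  have trans2 : ∀ ρ : ℝ, ρ < 1 → ρ / (1 - ρ) + η = 1 / (1 - ρ) - 1 + η := by
    intro ρ hρ
    have h1ρ : (1 : ℝ) - ρ ≠ 0 := by intro h; linarith [h]
    field_simp
    ring
  have hP : ∀ ρ ∈ Set.Ico (0 : ℝ) 1, ρ ≠ ρc →
      ((2 : ℝ) ^ (Q / ((1 - ρc) * T)) - 1) * (ρ / (1 - ρ) + η) <
        ((2 : ℝ) ^ (Q / ((1 - ρ) * T)) - 1) * (ρc / (1 - ρc) + η) := by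
    intro ρ hρ hne
    obtain ⟨hρ0, hρ1⟩ := hρ
    have h1ρ : (0:ℝ) < 1 - ρ := by linarith
    rw [trans1 ρ hρ1, trans1 ρc hρc1, trans2 ρ hρ1, trans2 ρc hρc1, hinvρc]
    apply hkey
    intro heq
    apply hne
    have hx : 1 - ρ = 1/xs := by
      rw [← heq, one_div_one_div]
    rw [hρcdef]
    linarith
  refine ⟨ρc, ⟨hρc0, hρc1⟩, hP, hP 0 ⟨le_refl 0, one_pos⟩ (ne_of_lt hρc0), ?_⟩
  intro ρc' hρc' hP'
  by_contra hne
  have A := hP' ρc ⟨le_of_lt hρc0, hρc1⟩ (Ne.symm hne)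
  have B := hP ρc' ⟨le_of_lt hρc'.1, hρc'.2⟩ hne
  linarith
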